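/- arXiv:1911.04184 — 4 statements merged into one kernel-verified Lean document; each statement's English description precedes it below -/
import Mathlib

section
/- Let C ⊆ ℝⁿ be a convex cone and A : ℝⁿ → ℝᵏ a linear map (1 ≤ k ≤ n−1). If the relative interior of C meets the kernel of A, then the image AC is a linear subspace of ℝᵏ, i.e. AC = lin(AC). -/
theorem stmt4 (n k : ℕ) (hk1 : 1 ≤ k) (hkn : k ≤ n - 1)
    (C : Set (EuclideanSpace ℝ (Fin n))) (hne : C.Nonempty)
    (hC : ∀ x ∈ C, ∀ y ∈ C, ∀ a b : ℝ, 0 ≤ a → 0 ≤ b → a • x + b • y ∈ C)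
    (A : EuclideanSpace ℝ (Fin n) →ₗ[ℝ] EuclideanSpace ℝ (Fin k))
    (h : (intrinsicInterior ℝ C ∩ (LinearMap.ker A : Set (EuclideanSpace ℝ (Fin n)))).Nonempty) :
    A '' C = (Submodule.span ℝ (A '' C) : Set (EuclideanSpace ℝ (Fin k))) := by
  obtain ⟨x₀, hx₀i, hx₀k⟩ := h
  have hx₀C : x₀ ∈ C := intrinsicInterior_subset hx₀i
  have hA0 : A x₀ = 0 := hx₀k
  -- C is closed under nonnegative scaling
  have hscale : ∀ x ∈ C, ∀ c : ℝ, 0 ≤ c → c • x ∈ C := by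
    intro x hx c hc
    have := hC x hx x hx c 0 hc le_rfl
    simpa using this
  -- key: for each y ∈ C there is w ∈ C with A w = -A y
  have key : ∀ y ∈ C, ∃ w ∈ C, A w = -A y := by
    intro y hy
    obtain ⟨x₀', hx₀'int, hx₀'eq⟩ := mem_intrinsicInterior.1 hx₀i
    have hySpan : y ∈ affineSpan ℝ C := subset_affineSpan ℝ C hy
    have hgmem : ∀ t : ℝ, x₀ + t • (x₀ - y) ∈ affineSpan ℝ C := by
      intro t
      have hd : x₀ - y ∈ (affineSpan ℝ C).direction := by
        have := AffineSubspace.vsub_mem_direction (subset_affineSpan ℝ C hx₀C) hySpan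
        simpa using this
      have hd' : t • (x₀ - y) ∈ (affineSpan ℝ C).direction :=
        Submodule.smul_mem _ t hd
      have := AffineSubspace.vadd_mem_of_mem_direction hd' (subset_affineSpan ℝ C hx₀C)
      simpa [vadd_eq_add, add_comm] using this
    set g' : ℝ → affineSpan ℝ C := fun t => ⟨x₀ + t • (x₀ - y), hgmem t⟩ with hg'
    have hcont : Continuous g' := by
      apply Continuous.subtype_mk
      continuity
    have hg'0 : g' 0 ∈ interior ((↑) ⁻¹' C : Set <| affineSpan ℝ C) := by
      have : g' 0 = x₀' := by
        apply Subtype.ext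
        simp [hg', hx₀'eq]
      rw [this]; exact hx₀'int
    have hopen : IsOpen (g' ⁻¹' interior ((↑) ⁻¹' C : Set <| affineSpan ℝ C)) :=
      isOpen_interior.preimage hcont
    obtain ⟨ε, hε, hball⟩ := Metric.isOpen_iff.1 hopen 0 hg'0
    have hεmem : (ε / 2) ∈ g' ⁻¹' interior ((↑) ⁻¹' C : Set <| affineSpan ℝ C) := by
      apply hball
      rw [Metric.mem_ball, Real.dist_eq, sub_zero, abs_of_pos (by positivity)]
      linarith
    have hzC : x₀ + (ε / 2) • (x₀ - y) ∈ C := by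
      have h1 : g' (ε / 2) ∈ (Subtype.val ⁻¹' C : Set <| affineSpan ℝ C) :=
        interior_subset hεmem
      exact h1
    have hε2 : (0:ℝ) < ε / 2 := by positivity
    refine ⟨(ε / 2)⁻¹ • (x₀ + (ε / 2) • (x₀ - y)), hscale _ hzC _ (by positivity), ?_⟩
    have : A (x₀ + (ε / 2) • (x₀ - y)) = -((ε / 2) • A y) := by
      simp [map_add, map_smul, map_sub, hA0]
    rw [map_smul, this, smul_neg, smul_smul, inv_mul_cancel₀ hε2.ne', one_smul]
  -- build the submodule
  let S : Submodule ℝ (EuclideanSpace ℝ (Fin k)) :=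
    { carrier := A '' C
      add_mem' := by
        rintro _ _ ⟨u, hu, rfl⟩ ⟨v, hv, rfl⟩
        refine ⟨u + v, ?_, by simp⟩
        have := hC u hu v hv 1 1 zero_le_one zero_le_one
        simpa using this
      zero_mem' := ⟨x₀, hx₀C, hA0⟩
      smul_mem' := by
        rintro c _ ⟨u, hu, rfl⟩
        rcases le_or_gt 0 c with hc | hc
        · exact ⟨c • u, hscale u hu c hc, by simp⟩
        · obtain ⟨w, hw, hAw⟩ := key u hu
          refine ⟨(-c) • w, hscale w hw (-c) (by linarith), ?_⟩
          rw [map_smul, hAw]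
          simp }
  have hS : A '' C = (S : Set (EuclideanSpace ℝ (Fin k))) := rfl
  rw [hS, Submodule.span_eq]
end

section
/- Let C ⊆ ℝⁿ be a convex cone and A : ℝⁿ → ℝᵏ a linear map (1 ≤ k ≤ n−1). If the image AC is a linear subspace of ℝᵏ, then the relative interior of C intersects the kernel of A. -/
open Set

lemma mem_intrinsicInterior_iff' {E : Type*} [NormedAddCommGroup E] [NormedSpace ℝ E]
    {s : Set E} {z : E} :
    z ∈ intrinsicInterior ℝ s ↔
      z ∈ affineSpan ℝ s ∧ ∃ U, IsOpen U ∧ z ∈ U ∧ U ∩ (affineSpan ℝ s : Set E) ⊆ s := by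
  constructor
  · rintro ⟨y, hy, rfl⟩
    refine ⟨y.2, ?_⟩
    rw [mem_interior_iff_mem_nhds, nhds_subtype_eq_comap, Filter.mem_comap] at hy
    obtain ⟨U, hU, hUs⟩ := hy
    obtain ⟨V, hVU, hVopen, hyV⟩ := mem_nhds_iff.1 hU
    refine ⟨V, hVopen, hyV, ?_⟩
    rintro w ⟨hw1, hw2⟩
    exact hUs (show ((⟨w, hw2⟩ : affineSpan ℝ s) : E) ∈ U from hVU hw1)
  · rintro ⟨hz, U, hUopen, hzU, hUs⟩
    refine ⟨⟨z, hz⟩, ?_, rfl⟩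
    rw [mem_interior_iff_mem_nhds, nhds_subtype_eq_comap, Filter.mem_comap]
    exact ⟨U, hUopen.mem_nhds hzU, fun w hw => hUs ⟨hw, w.2⟩⟩

theorem stmt5 (n k : ℕ) (hk1 : 1 ≤ k) (hkn : k ≤ n - 1)
    (C : Set (EuclideanSpace ℝ (Fin n))) (h0 : (0 : EuclideanSpace ℝ (Fin n)) ∈ C)
    (hC : ∀ x ∈ C, ∀ y ∈ C, ∀ a b : ℝ, 0 ≤ a → 0 ≤ b → a • x + b • y ∈ C)
    (A : EuclideanSpace ℝ (Fin n) →ₗ[ℝ] EuclideanSpace ℝ (Fin k))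
    (h : A '' C = (Submodule.span ℝ (A '' C) : Set (EuclideanSpace ℝ (Fin k)))) :
    (intrinsicInterior ℝ C ∩ (LinearMap.ker A : Set (EuclideanSpace ℝ (Fin n)))).Nonempty := by
  have hconv : Convex ℝ C := fun x hx y hy a b ha hb _ => hC x hx y hy a b ha hb
  obtain ⟨x, hx⟩ := Set.Nonempty.intrinsicInterior hconv ⟨0, h0⟩
  have hxC : x ∈ C := intrinsicInterior_subset hx
  have h1 : A x ∈ A '' C := ⟨x, hxC, rfl⟩
  have h2 : -(A x) ∈ A '' C := by
    rw [h] at h1 ⊢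
    exact neg_mem h1
  obtain ⟨y, hyC, hAy⟩ := h2
  set z : EuclideanSpace ℝ (Fin n) := (1/2 : ℝ) • x + (1/2 : ℝ) • y with hz
  have hzC : z ∈ C := hC x hxC y hyC _ _ (by norm_num) (by norm_num)
  have hAz : A z = 0 := by
    rw [hz, map_add, map_smul, map_smul, hAy]
    module
  obtain ⟨hxspan, U, hUo, hxU, hUsub⟩ := mem_intrinsicInterior_iff'.1 hx
  refine ⟨z, mem_intrinsicInterior_iff'.2 ⟨subset_affineSpan ℝ C hzC,
    (fun w => (2:ℝ) • w - y) ⁻¹' U, hUo.preimage ((continuous_const_smul (2:ℝ)).sub continuous_const), ?_, ?_⟩,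
    LinearMap.mem_ker.2 hAz⟩
  · show (2:ℝ) • z - y ∈ U
    have : (2:ℝ) • z - y = x := by rw [hz]; module
    rwa [this]
  · rintro w ⟨hwU, hwV⟩
    have hyV : y ∈ affineSpan ℝ C := subset_affineSpan ℝ C hyC
    have huV : (2:ℝ) • w - y ∈ affineSpan ℝ C := by
      have := AffineSubspace.smul_vsub_vadd_mem (affineSpan ℝ C) (2:ℝ) hwV hyV hyV
      have heq : (2:ℝ) • (w -ᵥ y) +ᵥ y = (2:ℝ) • w - y := by
        simp only [vsub_eq_sub, vadd_eq_add]
        module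
      rwa [heq] at this
    have huC : (2:ℝ) • w - y ∈ C := hUsub ⟨hwU, huV⟩
    have hw : w = (1/2 : ℝ) • ((2:ℝ) • w - y) + (1/2 : ℝ) • y := by module
    rw [hw]
    exact hC _ huC y hyC _ _ (by norm_num) (by norm_num)
end

section
/- Let C ⊆ ℝⁿ be a convex cone with 0 ∈ C, and suppose the relative interiors of C and a linear subspace L ⊆ ℝⁿ do not intersect. Then there exists a linear hyperplane H (through the origin) that separates C and L properly, and moreover L ⊆ H. -/
open RealInnerProductSpace Pointwise

section helpers
variable {E : Type*} [NormedAddCommGroup E] [NormedSpace ℝ E]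

lemma span_carrier_eq (s : Set E) (h0 : (0:E) ∈ s) :
    (affineSpan ℝ s : Set E) = (Submodule.span ℝ s : Set E) := by
  have := affineSpan_insert_zero (k := ℝ) s
  rwa [Set.insert_eq_self.mpr h0] at this

lemma mem_ri_iff (s : Set E) (h0 : (0:E) ∈ s) (x : E) :
    x ∈ intrinsicInterior ℝ s ↔ x ∈ Submodule.span ℝ s ∧
      ∃ ε > 0, ∀ y, y ∈ Submodule.span ℝ s → dist y x < ε → y ∈ s := by
  have hcar := span_carrier_eq s h0
  constructor
  · intro hx
    rw [mem_intrinsicInterior] at hx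
    obtain ⟨y, hy, rfl⟩ := hx
    have hy1 : (y : E) ∈ Submodule.span ℝ s := by
      have : (y : E) ∈ (affineSpan ℝ s : Set E) := y.2
      rwa [hcar] at this
    refine ⟨hy1, ?_⟩
    rw [mem_interior_iff_mem_nhds, Metric.mem_nhds_iff] at hy
    obtain ⟨ε, hε, hball⟩ := hy
    refine ⟨ε, hε, fun z hz hdz => ?_⟩
    have hz' : z ∈ affineSpan ℝ s := by
      rw [← SetLike.mem_coe, hcar]; exact hz
    have : (⟨z, hz'⟩ : affineSpan ℝ s) ∈ Metric.ball y ε := by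
      simpa [Metric.mem_ball, Subtype.dist_eq] using hdz
    exact hball this
  · rintro ⟨hx, ε, hε, h⟩
    have hx' : x ∈ affineSpan ℝ s := by
      rw [← SetLike.mem_coe, hcar]; exact hx
    rw [mem_intrinsicInterior]
    refine ⟨⟨x, hx'⟩, ?_, rfl⟩
    rw [mem_interior_iff_mem_nhds, Metric.mem_nhds_iff]
    refine ⟨ε, hε, fun z hz => ?_⟩
    have hz1 : (z : E) ∈ Submodule.span ℝ s := by
      have : (z : E) ∈ (affineSpan ℝ s : Set E) := z.2
      rwa [hcar] at this
    exact h z hz1 (by simpa [Metric.mem_ball, Subtype.dist_eq] using hz)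

end helpers

theorem main_sep {E : Type*} [NormedAddCommGroup E] [InnerProductSpace ℝ E]
    [FiniteDimensional ℝ E] (C : Set E)
    (h0 : (0 : E) ∈ C)
    (hC : ∀ x ∈ C, ∀ y ∈ C, ∀ a b : ℝ, 0 ≤ a → 0 ≤ b → a • x + b • y ∈ C)
    (L : Submodule ℝ E)
    (hdisj : intrinsicInterior ℝ C ∩ intrinsicInterior ℝ (L : Set E) = ∅) :
    ∃ u : E, u ≠ 0 ∧
      (∀ x ∈ C, 0 ≤ (inner ℝ u x : ℝ)) ∧
      (∀ x ∈ (L : Set E), (inner ℝ u x : ℝ) ≤ 0) ∧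
      ¬ (C ∪ (L : Set E) ⊆ {x | (inner ℝ u x : ℝ) = 0}) ∧
      (L : Set E) ⊆ {x | (inner ℝ u x : ℝ) = 0} := by
  have hconv : Convex ℝ C := fun x hx => fun y hy a b ha hb _ => hC x hx y hy a b ha hb
  set N : Submodule ℝ E := Submodule.span ℝ (C ∪ (L : Set E)) with hN
  set D : Set E := C + (L : Set E) + ((Nᗮ : Submodule ℝ E) : Set E) with hD
  -- basic inclusions
  have hCD : C ⊆ D := by
    intro c hc
    have : (c + 0) + 0 ∈ D :=
      Set.add_mem_add (Set.add_mem_add hc L.zero_mem) Nᗮ.zero_mem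
    simpa using this
  have hLD : (L : Set E) ⊆ D := by
    intro l hl
    have : ((0:E) + l) + 0 ∈ D := Set.add_mem_add (Set.add_mem_add h0 hl) Nᗮ.zero_mem
    simpa using this
  have hNpD : ((Nᗮ : Submodule ℝ E) : Set E) ⊆ D := by
    intro w hw
    have : ((0:E) + 0) + w ∈ D := Set.add_mem_add (Set.add_mem_add h0 L.zero_mem) hw
    simpa using this
  have h0D : (0:E) ∈ D := hCD h0
  have hDconv : Convex ℝ D := (hconv.add L.convex).add Nᗮ.convex
  -- spanning facts
  have hspanU : Submodule.span ℝ (C ∪ (L : Set E) ∪ ((Nᗮ : Submodule ℝ E) : Set E)) = ⊤ := by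
    rw [eq_top_iff, ← (Submodule.isCompl_orthogonal_of_hasOrthogonalProjection (K := N)).sup_eq_top,
      sup_le_iff]
    constructor
    · rw [hN]; exact Submodule.span_mono Set.subset_union_left
    · exact le_trans (le_of_eq (Submodule.span_eq Nᗮ).symm)
        (Submodule.span_mono Set.subset_union_right)
  have hsubU : C ∪ (L : Set E) ∪ ((Nᗮ : Submodule ℝ E) : Set E) ⊆ D := by
    rintro x ((hx | hx) | hx)
    exacts [hCD hx, hLD hx, hNpD hx]
  have hDspan : Submodule.span ℝ D = ⊤ :=
    top_unique (hspanU ▸ Submodule.span_mono hsubU)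
  -- ri L = L and disjointness
  have hriL : (L : Set E) ⊆ intrinsicInterior ℝ (L : Set E) := by
    intro x hx
    rw [mem_ri_iff _ L.zero_mem]
    refine ⟨by rw [Submodule.span_eq]; exact hx, 1, one_pos, fun y hy _ => ?_⟩
    rwa [Submodule.span_eq] at hy
  have hri : ∀ x, x ∈ intrinsicInterior ℝ C → x ∈ L → False := by
    intro x h1 h2
    exact Set.eq_empty_iff_forall_notMem.mp hdisj x ⟨h1, hriL h2⟩
  -- segment principle
  have hseg : ∀ x0 ∈ intrinsicInterior ℝ C, ∀ x1 ∈ C, ∀ a b : ℝ, 0 ≤ a → 0 < b → a + b = 1 →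
      a • x1 + b • x0 ∈ intrinsicInterior ℝ C := by
    intro x0 hx0 x1 hx1 a b ha hb _
    rw [mem_ri_iff C h0] at hx0 ⊢
    obtain ⟨hx0s, ε, hε, hball⟩ := hx0
    have hx1s : x1 ∈ Submodule.span ℝ C := Submodule.subset_span hx1
    refine ⟨Submodule.add_mem _ (Submodule.smul_mem _ _ hx1s) (Submodule.smul_mem _ _ hx0s),
      b * ε, by positivity, ?_⟩
    intro y hy hdy
    have hy0 : b⁻¹ • (y - a • x1) ∈ Submodule.span ℝ C :=
      Submodule.smul_mem _ _ (Submodule.sub_mem _ hy (Submodule.smul_mem _ _ hx1s))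
    have hd : dist (b⁻¹ • (y - a • x1)) x0 < ε := by
      rw [dist_eq_norm] at hdy ⊢
      have heq : b⁻¹ • (y - a • x1) - x0 = b⁻¹ • (y - (a • x1 + b • x0)) := by
        match_scalars <;> (field_simp; try ring)
      rw [heq, norm_smul, Real.norm_eq_abs, abs_of_pos (inv_pos.mpr hb)]
      rw [inv_mul_lt_iff₀ hb]
      exact hdy
    have hyC := hball _ hy0 hd
    have heq2 : y = a • x1 + b • (b⁻¹ • (y - a • x1)) := by
      match_scalars <;> (field_simp; try ring)
    rw [heq2]
    exact hC _ hx1 _ hyC a b ha hb.le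
  -- the key: 0 is not in the interior of D
  have key : (0:E) ∉ interior D := by
    intro h0i
    rw [mem_interior_iff_mem_nhds, Metric.mem_nhds_iff] at h0i
    obtain ⟨ε, hε, hball⟩ := h0i
    obtain ⟨x0, hx0⟩ := Set.Nonempty.intrinsicInterior hconv ⟨0, h0⟩
    have hx0s : x0 ∈ Submodule.span ℝ C := ((mem_ri_iff C h0 x0).mp hx0).1
    set t : ℝ := ε / (2 * (‖x0‖ + 1)) with ht
    have hx0n : (0:ℝ) ≤ ‖x0‖ := norm_nonneg _
    have htpos : 0 < t := by positivity
    have hmem : -(t • x0) ∈ D := by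
      apply hball
      rw [Metric.mem_ball, dist_eq_norm, sub_zero, norm_neg, norm_smul, Real.norm_eq_abs,
        abs_of_pos htpos]
      have h1 : t * ‖x0‖ < t * (‖x0‖ + 1) := by nlinarith
      have h2 : t * (‖x0‖ + 1) = ε / 2 := by
        rw [ht]; field_simp
      nlinarith
    rw [hD] at hmem
    obtain ⟨p, hp, w, hw, hpw⟩ := Set.mem_add.mp hmem
    obtain ⟨c, hc, l, hl, hcl⟩ := Set.mem_add.mp hp
    -- w ∈ N and w ∈ Nᗮ so w = 0
    have hx0N : x0 ∈ N := by
      rw [hN]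
      exact Submodule.span_mono (Set.subset_union_left) hx0s
    have hcN : c ∈ N := Submodule.subset_span (Or.inl hc)
    have hlN : l ∈ N := Submodule.subset_span (Or.inr hl)
    have hwN : w ∈ N := by
      have : w = -(t • x0) - c - l := by
        rw [← hpw, ← hcl]; abel
      rw [this]
      exact Submodule.sub_mem _ (Submodule.sub_mem _ (Submodule.neg_mem _
        (Submodule.smul_mem _ _ hx0N)) hcN) hlN
    have hw0 : w = 0 := by
      have := (Submodule.mem_orthogonal N w).mp hw w hwN
      rwa [inner_self_eq_zero] at this
    have hc' : c = -(t • x0) - l := by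
      rw [hw0, add_zero] at hpw
      rw [← hpw, ← hcl]; abel
    -- construct a point in ri C ∩ L
    have ht1 : (0:ℝ) < 1 + t := by linarith
    have hxri : (1/(1+t)) • c + (t/(1+t)) • x0 ∈ intrinsicInterior ℝ C := by
      apply hseg x0 hx0 c hc
      · positivity
      · positivity
      · field_simp
    have hxL : (1/(1+t)) • c + (t/(1+t)) • x0 ∈ L := by
      have : (1/(1+t)) • c + (t/(1+t)) • x0 = (-(1/(1+t))) • l := by
        rw [hc']
        match_scalars <;> (field_simp; try ring)
      rw [this]
      exact L.smul_mem _ hl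
    exact hri _ hxri hxL
  -- interior of D is nonempty
  have hintD : ∃ z, z ∈ interior D := by
    obtain ⟨z, hz⟩ := Set.Nonempty.intrinsicInterior hDconv ⟨0, h0D⟩
    obtain ⟨_, ε, hε, hb⟩ := (mem_ri_iff D h0D z).mp hz
    refine ⟨z, ?_⟩
    rw [mem_interior_iff_mem_nhds, Metric.mem_nhds_iff]
    exact ⟨ε, hε, fun y hy => hb y (by rw [hDspan]; trivial) hy⟩
  obtain ⟨z, hzint⟩ := hintD
  -- separation
  obtain ⟨f, hf⟩ := geometric_hahn_banach_open_point hDconv.interior isOpen_interior key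
  have hf0 : ∀ a ∈ interior D, f a < 0 := by
    intro a ha
    have := hf a ha
    rwa [map_zero] at this
  have hfz : f z < 0 := hf0 z hzint
  have hDle : ∀ x ∈ D, f x ≤ 0 := by
    intro x hx
    by_contra hpos
    push_neg at hpos
    set d : ℝ := f x - f z with hd
    have hdpos : 0 < d := by rw [hd]; linarith
    set a : ℝ := f x / (2 * d) with haa
    have ha : 0 < a := by positivity
    have ha1 : a ≤ 1/2 := by
      rw [haa, div_le_div_iff₀ (by positivity) (by norm_num)]
      nlinarith
    have hmem : a • z + (1 - a) • x ∈ interior D :=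
      hDconv.combo_interior_self_mem_interior hzint hx ha (by linarith) (by ring)
    have hlt := hf0 _ hmem
    rw [map_add, map_smul, map_smul, smul_eq_mul, smul_eq_mul] at hlt
    have : a * f z + (1 - a) * f x = f x - a * d := by rw [hd]; ring
    rw [this] at hlt
    have had : a * d = f x / 2 := by rw [haa]; field_simp
    rw [had] at hlt
    linarith
  have hfC : ∀ x ∈ C, f x ≤ 0 := fun x hx => hDle x (hCD hx)
  have hfL : ∀ x ∈ (L : Set E), f x = 0 := by
    intro x hx
    have h1 := hDle x (hLD hx)
    have h2 := hDle (-x) (hLD (L.neg_mem hx))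
    rw [map_neg] at h2
    linarith
  have hfNp : ∀ x ∈ ((Nᗮ : Submodule ℝ E) : Set E), f x = 0 := by
    intro x hx
    have h1 := hDle x (hNpD hx)
    have h2 := hDle (-x) (hNpD (Nᗮ.neg_mem hx))
    rw [map_neg] at h2
    linarith
  -- f is not identically zero on C
  have hfCne : ∃ x ∈ C, f x ≠ 0 := by
    by_contra h
    push_neg at h
    have hall : ∀ x : E, f x = 0 := by
      intro x
      have hx : x ∈ Submodule.span ℝ (C ∪ (L : Set E) ∪ ((Nᗮ : Submodule ℝ E) : Set E)) := by
        rw [hspanU]; trivial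
      induction hx using Submodule.span_induction with
      | mem y hy =>
        rcases hy with (hy | hy) | hy
        · exact h y hy
        · exact hfL y hy
        · exact hfNp y hy
      | zero => exact map_zero f
      | add y z _ _ hy hz => rw [map_add, hy, hz, add_zero]
      | smul a y _ hy => rw [map_smul, hy, smul_zero]
    exact absurd (hall z) (ne_of_lt hfz)
  obtain ⟨xc, hxc, hfxc⟩ := hfCne
  -- the separating vector
  refine ⟨-((InnerProductSpace.toDual ℝ E).symm f), ?_, ?_, ?_, ?_, ?_⟩
  · intro hu
    apply hfxc
    have h1 : (inner ℝ (-((InnerProductSpace.toDual ℝ E).symm f)) xc : ℝ) = -(f xc) := by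
      rw [inner_neg_left, InnerProductSpace.toDual_symm_apply]
    rw [hu, inner_zero_left] at h1
    linarith
  · intro x hx
    rw [inner_neg_left, InnerProductSpace.toDual_symm_apply]
    linarith [hfC x hx]
  · intro x hx
    rw [inner_neg_left, InnerProductSpace.toDual_symm_apply, hfL x hx]
    norm_num
  · intro hsub
    have := hsub (Set.mem_union_left _ hxc)
    rw [Set.mem_setOf_eq, inner_neg_left, InnerProductSpace.toDual_symm_apply] at this
    exact hfxc (by linarith)
  · intro x hx
    rw [Set.mem_setOf_eq, inner_neg_left, InnerProductSpace.toDual_symm_apply, hfL x hx]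
    norm_num


theorem stmt6 (n : ℕ) (C : Set (EuclideanSpace ℝ (Fin n)))
    (h0 : (0 : EuclideanSpace ℝ (Fin n)) ∈ C)
    (hC : ∀ x ∈ C, ∀ y ∈ C, ∀ a b : ℝ, 0 ≤ a → 0 ≤ b → a • x + b • y ∈ C)
    (L : Submodule ℝ (EuclideanSpace ℝ (Fin n)))
    (hdisj : intrinsicInterior ℝ C ∩ intrinsicInterior ℝ (L : Set (EuclideanSpace ℝ (Fin n))) = ∅) :
    ∃ u : EuclideanSpace ℝ (Fin n), u ≠ 0 ∧
      (∀ x ∈ C, 0 ≤ (inner ℝ u x : ℝ)) ∧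
      (∀ x ∈ (L : Set (EuclideanSpace ℝ (Fin n))), (inner ℝ u x : ℝ) ≤ 0) ∧
      ¬ (C ∪ (L : Set (EuclideanSpace ℝ (Fin n))) ⊆ {x | (inner ℝ u x : ℝ) = 0}) ∧
      (L : Set (EuclideanSpace ℝ (Fin n))) ⊆ {x | (inner ℝ u x : ℝ) = 0} :=
  main_sep C h0 hC L hdisj
end

section
/- Let C ⊆ ℝⁿ be a closed convex cone and x ∈ ℝⁿ. The norm of the metric projection of x onto C equals the supremum of positive parts of inner products with unit vectors of C: |Π_C(x)| = sup{⟨x, z⟩₊ / |z| : z ∈ C, z ≠ 0}, where Π_C(x) = argmin{|x − y| : y ∈ C} and a₊ = max(a, 0). (If C = {0}, both sides are interpreted as 0.) -/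
theorem stmt11 (n : ℕ) (C : Set (EuclideanSpace ℝ (Fin n)))
    (h0 : (0 : EuclideanSpace ℝ (Fin n)) ∈ C) (hcl : IsClosed C)
    (hC : ∀ x ∈ C, ∀ y ∈ C, ∀ a b : ℝ, 0 ≤ a → 0 ≤ b → a • x + b • y ∈ C)
    (x p : EuclideanSpace ℝ (Fin n)) (hp : p ∈ C)
    (hmin : ∀ y ∈ C, dist x p ≤ dist x y) :
    ‖p‖ = sSup {r : ℝ | ∃ z ∈ C, z ≠ 0 ∧ r = max (inner ℝ x z : ℝ) 0 / ‖z‖} := by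
  set S : Set ℝ := {r : ℝ | ∃ z ∈ C, z ≠ 0 ∧ r = max (inner ℝ x z : ℝ) 0 / ‖z‖} with hS
  set v : EuclideanSpace ℝ (Fin n) := x - p with hv
  -- distances squared
  have hsq : ∀ y ∈ C, ‖v‖ ^ 2 ≤ ‖x - y‖ ^ 2 := by
    intro y hy
    have := hmin y hy
    rw [dist_eq_norm, dist_eq_norm] at this
    have h1 : (0:ℝ) ≤ ‖x - p‖ := norm_nonneg _
    nlinarith [this]
  -- key variational inequality
  have key : ∀ z ∈ C, (inner ℝ v z : ℝ) ≤ 0 := by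
    intro z hz
    by_contra h
    push_neg at h
    have hzne : z ≠ 0 := by
      intro hzz
      rw [hzz, inner_zero_right] at h
      exact lt_irrefl _ h
    have hznorm : (0:ℝ) < ‖z‖ := norm_pos_iff.mpr hzne
    set a : ℝ := inner ℝ v z with ha
    set t : ℝ := a / ‖z‖ ^ 2 with ht
    have htpos : 0 < t := div_pos h (by positivity)
    have hyC : p + t • z ∈ C := by
      have := hC p hp z hz 1 t (by norm_num) htpos.le
      simpa using this
    have h2 := hsq (p + t • z) hyC
    have hrew : x - (p + t • z) = v - t • z := by
      rw [hv]; abel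
    rw [hrew] at h2
    have hexp : ‖v - t • z‖ ^ 2 = ‖v‖ ^ 2 - 2 * t * a + t ^ 2 * ‖z‖ ^ 2 := by
      rw [norm_sub_sq_real, real_inner_smul_right, norm_smul, Real.norm_eq_abs,
        abs_of_pos htpos, ← ha]
      ring
    rw [hexp] at h2
    have : t ^ 2 * ‖z‖ ^ 2 = t * a := by
      rw [ht]; field_simp
    nlinarith
  -- orthogonality: ⟨v, p⟩ = 0
  have horth : (inner ℝ v p : ℝ) = 0 := by
    have hle : (inner ℝ v p : ℝ) ≤ 0 := key p hp
    rcases eq_or_lt_of_le hle with heq | hlt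
    · exact heq
    exfalso
    set a : ℝ := inner ℝ v p with ha
    have hpne : p ≠ 0 := by
      intro hpp
      rw [ha, hpp, inner_zero_right] at hlt
      exact lt_irrefl _ hlt
    have hb : (0:ℝ) < ‖p‖ ^ 2 := pow_pos (norm_pos_iff.mpr hpne) 2
    set s : ℝ := min 1 (-a / ‖p‖ ^ 2) with hs
    have hspos : 0 < s := lt_min one_pos (div_pos (by linarith) hb)
    have hsle : s * ‖p‖ ^ 2 ≤ -a := by
      have : s ≤ -a / ‖p‖ ^ 2 := min_le_right _ _
      rw [le_div_iff₀ hb] at this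
      linarith
    have hyC : (1 - s) • p ∈ C := by
      have hs1 : s ≤ 1 := min_le_left _ _
      have := hC p hp p hp (1 - s) 0 (by linarith) le_rfl
      simpa using this
    have h2 := hsq ((1 - s) • p) hyC
    have hrew : x - (1 - s) • p = v + s • p := by
      rw [hv]
      rw [sub_smul, one_smul]
      abel
    rw [hrew] at h2
    have hexp : ‖v + s • p‖ ^ 2 = ‖v‖ ^ 2 + 2 * s * a + s ^ 2 * ‖p‖ ^ 2 := by
      rw [norm_add_sq_real, real_inner_smul_right, norm_smul, Real.norm_eq_abs,
        abs_of_pos hspos, ← ha]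
      ring
    rw [hexp] at h2
    nlinarith
  -- upper bound: every element of S is ≤ ‖p‖
  have hub : ∀ r ∈ S, r ≤ ‖p‖ := by
    rintro r ⟨z, hz, hzne, rfl⟩
    have hznorm : (0:ℝ) < ‖z‖ := norm_pos_iff.mpr hzne
    have h1 : (inner ℝ x z : ℝ) = inner ℝ v z + inner ℝ p z := by
      rw [hv, inner_sub_left]; ring
    have h2 : (inner ℝ p z : ℝ) ≤ ‖p‖ * ‖z‖ := real_inner_le_norm p z
    have h3 : (inner ℝ x z : ℝ) ≤ ‖p‖ * ‖z‖ := by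
      have := key z hz
      linarith
    have h4 : max (inner ℝ x z : ℝ) 0 ≤ ‖p‖ * ‖z‖ := by
      apply max_le h3 (by positivity)
    rw [div_le_iff₀ hznorm]
    exact h4
  rcases eq_or_ne p 0 with hp0 | hpne
  · -- p = 0 case
    subst hp0
    simp only [norm_zero]
    have hSsub : ∀ r ∈ S, r = 0 := by
      rintro r ⟨z, hz, hzne, rfl⟩
      have hznorm : (0:ℝ) < ‖z‖ := norm_pos_iff.mpr hzne
      have := key z hz
      rw [hv, sub_zero] at this
      rw [max_eq_right this, zero_div]
    rcases S.eq_empty_or_nonempty with hE | hNE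
    · rw [hE, Real.sSup_empty]
    · symm
      apply le_antisymm
      · exact Real.sSup_le (fun r hr => le_of_eq (hSsub r hr)) le_rfl
      · obtain ⟨r, hr⟩ := hNE
        have := hSsub r hr
        rw [← this]
        exact le_csSup ⟨0, fun y hy => le_of_eq (hSsub y hy)⟩ hr
  · -- p ≠ 0 case
    have hpnorm : (0:ℝ) < ‖p‖ := norm_pos_iff.mpr hpne
    have hmem : ‖p‖ ∈ S := by
      refine ⟨p, hp, hpne, ?_⟩
      have h1 : (inner ℝ x p : ℝ) = ‖p‖ ^ 2 := by
        have h2 : (inner ℝ v p : ℝ) = inner ℝ x p - inner ℝ p p := by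
          rw [hv, inner_sub_left]
        rw [horth] at h2
        rw [real_inner_self_eq_norm_sq] at h2
        linarith
      rw [h1, max_eq_left (by positivity)]
      field_simp
    symm
    apply le_antisymm
    · exact Real.sSup_le hub hpnorm.le
    · exact le_csSup ⟨‖p‖, hub⟩ hmem
end
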